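/- Let γ : ℝ → (n×n Hermitian complex matrices) be a curve that is differentiable at t₀ and such that γ(t) is positive semidefinite for every t ∈ ℝ. Then for all x, y ∈ ℂⁿ with γ(t₀)x = 0 and γ(t₀)y = 0, one has ⟨γ'(t₀)x, y⟩ = 0. In particular, every smooth curve lying in the cone of positive semidefinite matrices is, at each point, tangent to the stratum of fixed rank it passes through. -/

import Mathlib

open scoped ComplexOrder Matrix

private lemma quad_deriv_zero {n : ℕ} (γ : ℝ → Matrix (Fin n) (Fin n) ℂ)
    (γ' : Matrix (Fin n) (Fin n) ℂ) (t₀ : ℝ)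
    (hdiff : ∀ i j, HasDerivAt (fun t => γ t i j) (γ' i j) t₀)
    (hpos : ∀ t, (γ t).PosSemidef) (v : Fin n → ℂ) (hv : γ t₀ *ᵥ v = 0) :
    star v ⬝ᵥ (γ' *ᵥ v) = 0 := by
  set d : ℂ := star v ⬝ᵥ (γ' *ᵥ v) with hd
  have hform : ∀ (M : Matrix (Fin n) (Fin n) ℂ),
      star v ⬝ᵥ (M *ᵥ v) = ∑ i, ∑ j, star (v i) * (M i j * v j) := by
    intro M
    simp [dotProduct, Matrix.mulVec, Finset.mul_sum]
  have hg : HasDerivAt (fun t => star v ⬝ᵥ (γ t *ᵥ v)) d t₀ := by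
    have : HasDerivAt (fun t => ∑ i, ∑ j, star (v i) * (γ t i j * v j))
        (∑ i, ∑ j, star (v i) * (γ' i j * v j)) t₀ := by
      apply HasDerivAt.fun_sum
      intro i _
      apply HasDerivAt.fun_sum
      intro j _
      exact ((hdiff i j).mul_const (v j)).const_mul (star (v i))
    rw [hd, hform]
    simpa [hform] using this
  have hge : ∀ t, 0 ≤ star v ⬝ᵥ (γ t *ᵥ v) := fun t => (hpos t).dotProduct_mulVec_nonneg v
  have h0 : star v ⬝ᵥ (γ t₀ *ᵥ v) = 0 := by simp [hv]
  -- real part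
  have hre : HasDerivAt (fun t => (star v ⬝ᵥ (γ t *ᵥ v)).re) d.re t₀ :=
    Complex.reCLM.hasFDerivAt.comp_hasDerivAt t₀ hg
  have hmin : IsLocalMin (fun t => (star v ⬝ᵥ (γ t *ᵥ v)).re) t₀ := by
    apply Filter.Eventually.of_forall
    intro t
    have := hge t
    rw [Complex.le_def] at this
    simp only [h0, Complex.zero_re]
    exact this.1
  have hdre : d.re = 0 := hmin.hasDerivAt_eq_zero hre
  -- imaginary part
  have him : HasDerivAt (fun t => (star v ⬝ᵥ (γ t *ᵥ v)).im) d.im t₀ :=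
    Complex.imCLM.hasFDerivAt.comp_hasDerivAt t₀ hg
  have him0 : HasDerivAt (fun t => (star v ⬝ᵥ (γ t *ᵥ v)).im) 0 t₀ := by
    have : (fun t => (star v ⬝ᵥ (γ t *ᵥ v)).im) = fun _ => (0 : ℝ) := by
      funext t
      have := hge t
      rw [Complex.le_def] at this
      simp [← this.2]
    rw [this]
    exact hasDerivAt_const t₀ 0
  have hdim : d.im = 0 := him.unique him0
  exact Complex.ext hdre hdim

/-- If `γ` is a curve of matrices lying in the cone of positive semidefinite matrices,
differentiable at `t₀` (entrywise, with derivative matrix `γ'`), then for all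
`x, y` in the kernel of `γ(t₀)` one has `⟨γ'(t₀)x, y⟩ = 0`: the curve is tangent at
each point to the stratum of fixed rank it passes through. -/
theorem curve_in_cone_tangent_to_stratum {n : ℕ} (γ : ℝ → Matrix (Fin n) (Fin n) ℂ)
    (γ' : Matrix (Fin n) (Fin n) ℂ) (t₀ : ℝ)
    (hdiff : ∀ i j, HasDerivAt (fun t => γ t i j) (γ' i j) t₀)
    (hpos : ∀ t, (γ t).PosSemidef) :
    ∀ x y : Fin n → ℂ, γ t₀ *ᵥ x = 0 → γ t₀ *ᵥ y = 0 →
      star (γ' *ᵥ x) ⬝ᵥ y = 0 := by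
  intro x y hx hy
  have Q := quad_deriv_zero γ γ' t₀ hdiff hpos
  have h1 := Q x hx
  have h2 := Q y hy
  have h3 := Q (x + y) (by rw [Matrix.mulVec_add, hx, hy, add_zero])
  have h4 := Q (x + Complex.I • y)
    (by rw [Matrix.mulVec_add, Matrix.mulVec_smul, hx, hy, smul_zero, add_zero])
  simp only [Matrix.mulVec_add, Matrix.mulVec_smul, star_add, star_smul,
    add_dotProduct, dotProduct_add, smul_dotProduct,
    dotProduct_smul, smul_eq_mul, Complex.star_def, Complex.conj_I,
    RingHom.id_apply] at h3 h4
  set a := star x ⬝ᵥ (γ' *ᵥ y) with ha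
  set b := star y ⬝ᵥ (γ' *ᵥ x) with hb
  have e1 : a + b = 0 := by linear_combination h3 - h1 - h2
  have e2 : a - b = 0 := by
    have hI : Complex.I * (a - b) = 0 := by
      linear_combination h4 - h1 - h2 + (star y ⬝ᵥ (γ' *ᵥ y)) * Complex.I_mul_I
    exact (mul_eq_zero.mp hI).resolve_left Complex.I_ne_zero
  have hbz : b = 0 := by linear_combination (e1 - e2) / 2
  -- goal: star (γ' *ᵥ x) ⬝ᵥ y = conj b = 0
  have hconj : star (γ' *ᵥ x) ⬝ᵥ y = (starRingEnd ℂ) b := by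
    simp [hb, dotProduct, map_sum, mul_comm]
  rw [hconj, hbz, map_zero]
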